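/- Let G = SL₂(ℂ) with its matrix topology, let H ≤ G be the subgroup of matrices with real entries (a copy of SL₂(ℝ)), let Γ ≤ G be a discrete subgroup, and let g ∈ G. Suppose the set H·g·Γ is closed in G (equivalently, the SL₂(ℝ)-orbit of the coset gΓ is closed in G/Γ). Then the image of the set Γ·g⁻¹ = {γ·g⁻¹ : γ ∈ Γ} under the quotient map G → G/H (left cosets xH, with the quotient topology) is a discrete subset of G/H: every point of this image has a neighborhood in G/H containing no other point of the image. -/

import Mathlib

open Matrix

/-- The subspace topology on `SL₂(ℂ)` induced from the matrix topology. -/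
noncomputable instance : TopologicalSpace (Matrix.SpecialLinearGroup (Fin 2) ℂ) :=
  TopologicalSpace.induced (fun g => (g : Matrix (Fin 2) (Fin 2) ℂ)) inferInstance

/-- The subgroup of `SL₂(ℂ)` consisting of matrices with real entries
(a copy of `SL₂(ℝ)`). -/
noncomputable def realSL2 : Subgroup (Matrix.SpecialLinearGroup (Fin 2) ℂ) where
  carrier := {g | ∀ i j, ((g : Matrix (Fin 2) (Fin 2) ℂ) i j).im = 0}
  one_mem' := by
    intro i j
    fin_cases i <;> fin_cases j <;>
      simp [Matrix.SpecialLinearGroup.coe_one, Matrix.one_apply]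
  mul_mem' := by
    intro a b ha hb i j
    simp only [Matrix.SpecialLinearGroup.coe_mul, Matrix.mul_apply, Fin.sum_univ_two,
      Complex.add_im, Complex.mul_im]
    rw [ha i 0, ha i 1, hb 0 j, hb 1 j]
    ring
  inv_mem' := by
    intro a ha i j
    rw [Matrix.SpecialLinearGroup.SL2_inv_expl a]
    fin_cases i <;> fin_cases j <;>
      simp only [Matrix.cons_val', Matrix.cons_val_zero, Matrix.cons_val_one, Matrix.head_cons,
        Matrix.head_fin_const, Matrix.empty_val', Matrix.cons_val_fin_one, Complex.neg_im] <;>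
      simp [ha 0 0, ha 0 1, ha 1 0, ha 1 1]

namespace Claim426

abbrev G2 := Matrix.SpecialLinearGroup (Fin 2) ℂ

lemma contCoe : Continuous (fun g : G2 => (g : Matrix (Fin 2) (Fin 2) ℂ)) :=
  continuous_induced_dom

lemma inducingCoe : Topology.IsInducing (fun g : G2 => (g : Matrix (Fin 2) (Fin 2) ℂ)) :=
  ⟨rfl⟩

lemma injCoe : Function.Injective (fun g : G2 => (g : Matrix (Fin 2) (Fin 2) ℂ)) :=
  fun a b h => Subtype.ext h

lemma closedEmbCoe :
    Topology.IsClosedEmbedding (fun g : G2 => (g : Matrix (Fin 2) (Fin 2) ℂ)) := by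
  refine ⟨⟨inducingCoe, injCoe⟩, ?_⟩
  have : Set.range (fun g : G2 => (g : Matrix (Fin 2) (Fin 2) ℂ))
      = {A : Matrix (Fin 2) (Fin 2) ℂ | A.det = 1} := by
    ext A
    constructor
    · rintro ⟨g, rfl⟩; exact g.2
    · intro h; exact ⟨⟨A, h⟩, rfl⟩
  rw [this]
  exact isClosed_eq (continuous_id.matrix_det) continuous_const

lemma contMul : Continuous (fun p : G2 × G2 => p.1 * p.2) := by
  refine continuous_induced_rng.2 ?_
  have : ((fun g : G2 => (g : Matrix (Fin 2) (Fin 2) ℂ)) ∘ fun p : G2 × G2 => p.1 * p.2)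
      = fun p : G2 × G2 => (p.1 : Matrix (Fin 2) (Fin 2) ℂ) * (p.2 : Matrix (Fin 2) (Fin 2) ℂ) := by
    funext p; rfl
  rw [this]
  exact (contCoe.comp continuous_fst).matrix_mul (contCoe.comp continuous_snd)

lemma contMulRight (c : G2) : Continuous fun x : G2 => x * c :=
  contMul.comp (continuous_id.prodMk continuous_const)

lemma contMulLeft (c : G2) : Continuous fun x : G2 => c * x :=
  contMul.comp (continuous_const.prodMk continuous_id)

lemma contInv : Continuous (fun x : G2 => x⁻¹) := by
  refine continuous_induced_rng.2 ?_
  have : ((fun g : G2 => (g : Matrix (Fin 2) (Fin 2) ℂ)) ∘ fun x : G2 => x⁻¹)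
      = fun x : G2 => ((x : Matrix (Fin 2) (Fin 2) ℂ)).adjugate := by
    funext x
    exact Matrix.SpecialLinearGroup.coe_inv x
  rw [this]
  exact contCoe.matrix_adjugate



lemma isClosed_H : IsClosed {x : G2 | x ∈ realSL2} := by
  have h1 : {x : G2 | x ∈ realSL2} =
      ⋂ (i : Fin 2) (j : Fin 2), {x : G2 | ((x : Matrix (Fin 2) (Fin 2) ℂ) i j).im = 0} := by
    ext x
    simp only [Set.mem_iInter, Set.mem_setOf_eq]
    exact Iff.rfl
  rw [h1]
  refine isClosed_iInter fun i => isClosed_iInter fun j => isClosed_eq ?_ continuous_const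
  exact Complex.continuous_im.comp ((continuous_apply j).comp ((continuous_apply i).comp contCoe))

lemma isClosed_coset (c : G2) : IsClosed {x : G2 | ∃ h ∈ realSL2, x = h * c} := by
  have h1 : {x : G2 | ∃ h ∈ realSL2, x = h * c}
      = (fun x : G2 => x * c⁻¹) ⁻¹' {x : G2 | x ∈ realSL2} := by
    ext x
    constructor
    · rintro ⟨h, hh, rfl⟩
      simpa [mul_assoc] using hh
    · intro hx
      exact ⟨x * c⁻¹, hx, by simp [mul_assoc]⟩
  rw [h1]
  exact isClosed_H.preimage (contMulRight c⁻¹)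

lemma secondCountable : SecondCountableTopology G2 := by
  haveI : SecondCountableTopology (Matrix (Fin 2) (Fin 2) ℂ) :=
    inferInstanceAs (SecondCountableTopology (Fin 2 → Fin 2 → ℂ))
  exact inducingCoe.secondCountableTopology

lemma baire_aux {X : Type*} [MetricSpace X] [CompleteSpace X] {ι : Type*} [Countable ι]
    {S : Set X} (hS : IsClosed S) (hne : S.Nonempty) {F : ι → Set X}
    (hFc : ∀ i, IsClosed (F i)) (hcov : S ⊆ ⋃ i, F i) :
    ∃ i, ∃ x ∈ F i, ∃ V : Set X, IsOpen V ∧ x ∈ V ∧ V ∩ S ⊆ F i := by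
  haveI := hS.completeSpace_coe
  haveI : Nonempty S := hne.to_subtype
  obtain ⟨i, x, hx⟩ := nonempty_interior_of_iUnion_of_closed
    (f := fun i => (Subtype.val ⁻¹' F i : Set S))
    (fun i => (hFc i).preimage continuous_subtype_val)
    (Set.eq_univ_of_forall fun y => by
      have := hcov y.2
      simpa using this)
  obtain ⟨O, hOsub, hOopen, hxO⟩ := mem_interior.1 hx
  obtain ⟨V, hV, rfl⟩ := isOpen_induced_iff.1 hOopen
  refine ⟨i, x, hOsub hxO, V, hV, hxO, ?_⟩
  rintro y ⟨hyV, hyS⟩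
  exact hOsub (show (⟨y, hyS⟩ : S) ∈ _ from hyV)


lemma key (Γ : Subgroup G2) (hΓ : DiscreteTopology Γ) (g : G2)
    (hclosed : IsClosed {x : G2 | ∃ h ∈ realSL2, ∃ γ ∈ Γ, x = h * g * γ}) :
    ∃ W : Set G2, IsOpen W ∧ g ∈ W ∧
      ∀ x ∈ W, (∃ h ∈ realSL2, ∃ γ ∈ Γ, x = h * g * γ) → ∃ h ∈ realSL2, x = h * g := by
  haveI := secondCountable
  haveI : Countable Γ := (TopologicalSpace.separableSpace_iff_countable).1 inferInstance
  letI : MetricSpace (Matrix (Fin 2) (Fin 2) ℂ) :=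
    (inferInstance : MetricSpace (Fin 2 → Fin 2 → ℂ))
  haveI : @CompleteSpace (Matrix (Fin 2) (Fin 2) ℂ) PseudoMetricSpace.toUniformSpace :=
    inferInstanceAs (CompleteSpace (Fin 2 → Fin 2 → ℂ))
  set e : G2 → Matrix (Fin 2) (Fin 2) ℂ := fun x => (x : Matrix (Fin 2) (Fin 2) ℂ) with he
  set S : Set G2 := {x | ∃ h ∈ realSL2, ∃ γ ∈ Γ, x = h * g * γ} with hSdef
  set F : Γ → Set G2 := fun γ => {x | ∃ h ∈ realSL2, x = h * (g * (γ : G2))} with hFdef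
  have hS' : IsClosed (e '' S) := closedEmbCoe.isClosedMap _ hclosed
  have hF' : ∀ γ : Γ, IsClosed (e '' F γ) := fun γ =>
    closedEmbCoe.isClosedMap _ (isClosed_coset (g * (γ : G2)))
  have hne : (e '' S).Nonempty := ⟨e g, g, ⟨1, one_mem _, 1, one_mem _, by simp⟩, rfl⟩
  have hcov : e '' S ⊆ ⋃ γ : Γ, e '' F γ := by
    rintro _ ⟨x, ⟨h, hh, γ, hγ, rfl⟩, rfl⟩
    exact Set.mem_iUnion.2 ⟨⟨γ, hγ⟩, ⟨h * g * γ, ⟨h, hh, mul_assoc h g γ⟩, rfl⟩⟩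
  obtain ⟨γ₁, m, hmF, V, hVopen, hmV, hVS⟩ := baire_aux hS' hne hF' hcov
  obtain ⟨x₁, hx₁F, rfl⟩ := hmF
  obtain ⟨h₁, hh₁, rfl⟩ := hx₁F
  refine ⟨(fun y : G2 => h₁ * (y * (γ₁ : G2))) ⁻¹' (e ⁻¹' V),
    (hVopen.preimage contCoe).preimage ((contMulLeft h₁).comp (contMulRight (γ₁ : G2))),
    hmV, ?_⟩
  rintro x hxW ⟨h, hh, γ, hγ, rfl⟩
  have hyS : h₁ * ((h * g * γ) * (γ₁ : G2)) ∈ S := by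
    refine ⟨h₁ * h, mul_mem hh₁ hh, γ * (γ₁ : G2), mul_mem hγ γ₁.2, by group⟩
  have hyF : e (h₁ * ((h * g * γ) * (γ₁ : G2))) ∈ e '' F γ₁ :=
    hVS ⟨hxW, ⟨_, hyS, rfl⟩⟩
  obtain ⟨z, hzF, hez⟩ := hyF
  have hz : z = h₁ * ((h * g * γ) * (γ₁ : G2)) := injCoe hez
  rw [hz] at hzF
  obtain ⟨h', hh', hEq⟩ := hzF
  refine ⟨h₁⁻¹ * h', mul_mem (inv_mem hh₁) hh', ?_⟩
  have e1 : h * g * γ = h₁⁻¹ * (h₁ * ((h * g * γ) * (γ₁ : G2))) * (γ₁ : G2)⁻¹ := by group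
  rw [hEq] at e1
  rw [e1]
  group

end Claim426

/-- **Claim 4.26 (discreteness of `Γ·(g⁻¹·w₀)`).**
Let `G = SL₂(ℂ)`, let `H ≤ G` be the subgroup of real matrices, let `Γ ≤ G` be a discrete
subgroup and `g ∈ G`.  If `H·g·Γ` is closed in `G`, then the image of `Γ·g⁻¹` in `G/H`
is discrete: each of its points has an open neighborhood containing no other point of the
image. -/
theorem discreteness_of_orbit
    (Γ : Subgroup (Matrix.SpecialLinearGroup (Fin 2) ℂ)) (hΓ : DiscreteTopology Γ)
    (g : Matrix.SpecialLinearGroup (Fin 2) ℂ)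
    (hclosed : IsClosed {x : Matrix.SpecialLinearGroup (Fin 2) ℂ |
      ∃ h ∈ realSL2, ∃ γ ∈ Γ, x = h * g * γ}) :
    ∀ γ₀ ∈ Γ, ∃ U : Set (Matrix.SpecialLinearGroup (Fin 2) ℂ ⧸ realSL2),
      IsOpen U ∧ (γ₀ * g⁻¹ : Matrix.SpecialLinearGroup (Fin 2) ℂ) ∈ (QuotientGroup.mk ⁻¹' U) ∧
      ∀ γ ∈ Γ, (QuotientGroup.mk (γ * g⁻¹) : Matrix.SpecialLinearGroup (Fin 2) ℂ ⧸ realSL2) ∈ U →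
        (QuotientGroup.mk (γ * g⁻¹) : Matrix.SpecialLinearGroup (Fin 2) ℂ ⧸ realSL2)
          = QuotientGroup.mk (γ₀ * g⁻¹) := by
  intro γ₀ hγ₀
  obtain ⟨W, hWopen, hgW, hWprop⟩ := Claim426.key Γ hΓ g hclosed
  set A : Set Claim426.G2 := (fun x : Claim426.G2 => x⁻¹ * γ₀) ⁻¹' W with hAdef
  have hAopen : IsOpen A :=
    hWopen.preimage ((Claim426.contMulRight γ₀).comp Claim426.contInv)
  refine ⟨(QuotientGroup.mk : Claim426.G2 → Claim426.G2 ⧸ realSL2) '' A, ?_, ?_, ?_⟩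
  · -- openness
    have hpre : (QuotientGroup.mk : Claim426.G2 → Claim426.G2 ⧸ realSL2) ⁻¹'
        ((QuotientGroup.mk : Claim426.G2 → Claim426.G2 ⧸ realSL2) '' A)
        = ⋃ (h : realSL2), (fun x : Claim426.G2 => x * (h : Claim426.G2)) ⁻¹' A := by
      ext x
      constructor
      · rintro ⟨a, haA, hmk⟩
        have hmem : a⁻¹ * x ∈ realSL2 := QuotientGroup.eq.1 hmk
        refine Set.mem_iUnion.2 ⟨⟨(a⁻¹ * x)⁻¹, inv_mem hmem⟩, ?_⟩
        show x * (a⁻¹ * x)⁻¹ ∈ A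
        have : x * (a⁻¹ * x)⁻¹ = a := by group
        rw [this]; exact haA
      · intro hx
        obtain ⟨h, hxh⟩ := Set.mem_iUnion.1 hx
        refine ⟨x * (h : Claim426.G2), hxh, ?_⟩
        refine QuotientGroup.eq.2 ?_
        have : (x * (h : Claim426.G2))⁻¹ * x = (h : Claim426.G2)⁻¹ := by group
        rw [this]; exact inv_mem h.2
    have hopen : IsOpen ((QuotientGroup.mk : Claim426.G2 → Claim426.G2 ⧸ realSL2) ⁻¹'
        ((QuotientGroup.mk : Claim426.G2 → Claim426.G2 ⧸ realSL2) '' A)) := by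
      rw [hpre]
      exact isOpen_iUnion fun h => hAopen.preimage (Claim426.contMulRight (h : Claim426.G2))
    exact isOpen_coinduced.2 hopen
  · -- base point
    refine ⟨γ₀ * g⁻¹, ?_, rfl⟩
    show (γ₀ * g⁻¹)⁻¹ * γ₀ ∈ W
    have : (γ₀ * g⁻¹)⁻¹ * γ₀ = g := by group
    rw [this]; exact hgW
  · -- isolation
    intro γ hγ hU
    obtain ⟨a, haA, hmk⟩ := hU
    have hmem : a⁻¹ * (γ * g⁻¹) ∈ realSL2 := QuotientGroup.eq.1 hmk
    have hinW : a⁻¹ * γ₀ ∈ W := haA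
    have hinS : ∃ h ∈ realSL2, ∃ γ' ∈ Γ, a⁻¹ * γ₀ = h * g * γ' := by
      refine ⟨a⁻¹ * (γ * g⁻¹), hmem, γ⁻¹ * γ₀, mul_mem (inv_mem hγ) hγ₀, by group⟩
    obtain ⟨h', hh', heq⟩ := hWprop _ hinW hinS
    have e1 : (γ * g⁻¹)⁻¹ * (γ₀ * g⁻¹) = (a⁻¹ * (γ * g⁻¹))⁻¹ * ((a⁻¹ * γ₀) * g⁻¹) := by
      group
    rw [heq] at e1
    have e2 : (a⁻¹ * (γ * g⁻¹))⁻¹ * ((h' * g) * g⁻¹) = (a⁻¹ * (γ * g⁻¹))⁻¹ * h' := by group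
    rw [e2] at e1
    refine QuotientGroup.eq.2 ?_
    rw [e1]
    exact mul_mem (inv_mem hmem) hh'
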